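/- If a partition satisfies conditions (i)–(iii) (only multiples of 6 repeated; b_i − b_{i+2} ≥ 6 with strict inequality if b_i ≡ 0 mod 6; and the multiplicity conditions f_{6j+3}=0, f_{6j+2}+f_{6j+4}≤1, f_{6j+5}+f_{6j+7}≤1, f_{6j-1}+f_{6j}+f_{6j+6}+f_{6j+7}≤3), then for each i ≥ 0 the multiset of its parts lying in the interval [6i+1, 6i+6] is one of exactly the following 16 possibilities: ∅, {6i+1}, {6i+2}, {6i+2, 6i+1}, {6i+4}, {6i+4, 6i+1}, {6i+5}, {6i+5, 6i+1}, {6i+5, 6i+2}, {6i+5, 6i+4}, {6i+6}, {6i+6, 6i+1}, {6i+6, 6i+2}, {6i+6, 6i+4}, {6i+6, 6i+5}, {6i+6, 6i+6}. -/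

import Mathlib

/-- The condition defining type-B partitions (conditions (i)–(iii)), on the
weakly decreasing list of parts. -/
def BCond (l : List ℕ) : Prop :=
  l.Pairwise (· ≥ ·) ∧ (∀ x ∈ l, 0 < x) ∧
  (∀ x : ℕ, ¬ (6 ∣ x) → l.count x ≤ 1) ∧
  (∀ i : ℕ, ∀ h : i + 2 < l.length,
     l.get ⟨i + 2, h⟩ + 6 ≤ l.get ⟨i, by omega⟩ ∧
     (6 ∣ l.get ⟨i, by omega⟩ → l.get ⟨i + 2, h⟩ + 6 < l.get ⟨i, by omega⟩)) ∧
  (∀ j : ℕ, l.count (6 * j + 3) = 0) ∧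
  (∀ j : ℕ, l.count (6 * j + 2) + l.count (6 * j + 4) ≤ 1) ∧
  (∀ j : ℕ, l.count (6 * j + 5) + l.count (6 * j + 7) ≤ 1) ∧
  (∀ j : ℕ, 1 ≤ j →
    l.count (6 * j - 1) + l.count (6 * j) + l.count (6 * j + 6) + l.count (6 * j + 7) ≤ 3)

/-- Number of parts ≡ 0, 1 or 2 (mod 6). -/
def muCount (l : List ℕ) : ℕ := l.countP (fun x => x % 6 == 0 || x % 6 == 1 || x % 6 == 2)

/-- Number of parts ≡ 0, 4 or 5 (mod 6). -/
def nuCount (l : List ℕ) : ℕ := l.countP (fun x => x % 6 == 0 || x % 6 == 4 || x % 6 == 5)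

/-- The 16 configurations of Table 1, as multisets of parts in `[6n+1, 6n+6]`. -/
def cfg (n k : ℕ) : Multiset ℕ :=
  match k with
  | 0 => 0
  | 1 => {6 * n + 1}
  | 2 => {6 * n + 2}
  | 3 => {6 * n + 2, 6 * n + 1}
  | 4 => {6 * n + 4}
  | 5 => {6 * n + 4, 6 * n + 1}
  | 6 => {6 * n + 5}
  | 7 => {6 * n + 5, 6 * n + 1}
  | 8 => {6 * n + 5, 6 * n + 2}
  | 9 => {6 * n + 5, 6 * n + 4}
  | 10 => {6 * n + 6}
  | 11 => {6 * n + 6, 6 * n + 1}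
  | 12 => {6 * n + 6, 6 * n + 2}
  | 13 => {6 * n + 6, 6 * n + 4}
  | 14 => {6 * n + 6, 6 * n + 5}
  | _ => {6 * n + 6, 6 * n + 6}

/-- `BnCount n j μ ν N` = number of type-B partitions of `N` with all parts `≤ 6n+6`,
top-interval configuration of number `≤ j`, `μ` parts ≡ 0,1,2 (mod 6) and
`ν` parts ≡ 0,4,5 (mod 6). -/
noncomputable def BnCount (n j μ ν N : ℕ) : ℕ :=
  Set.ncard {l : List ℕ | BCond l ∧ (∀ x ∈ l, x ≤ 6 * n + 6) ∧
    (∃ k ≤ j, Multiset.filter (fun x => 6 * n + 1 ≤ x ∧ x ≤ 6 * n + 6) ↑l = cfg n k) ∧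
    muCount l = μ ∧ nuCount l = ν ∧ l.sum = N}

/-- The ambient ring: power series in `a`, `b` with coefficients Laurent
(Hahn) series in `q` over `ℤ`. -/
abbrev GFRing : Type := MvPowerSeries (Fin 2) (HahnSeries ℤ ℤ)

/-- A Hahn series in `q` from a coefficient function supported on `ℕ`. -/
noncomputable def hsOf (f : ℕ → ℤ) : HahnSeries ℤ ℤ where
  coeff z := if h : 0 ≤ z then f z.toNat else 0
  isPWO_support' := by
    apply Set.IsWF.isPWO
    apply BddBelow.wellFoundedOn_lt
    refine ⟨0, fun z hz => ?_⟩
    by_contra h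
    exact hz (dif_neg h)

/-- Build an element of `GFRing` from coefficients. -/
noncomputable def gfOf (c : ℕ → ℕ → ℕ → ℤ) : GFRing :=
  fun d => hsOf (fun N => c (d 0) (d 1) N)

noncomputable def qpow (z : ℤ) : GFRing := MvPowerSeries.C (σ := Fin 2) (R := HahnSeries ℤ ℤ) (HahnSeries.single z 1)

noncomputable def av : GFRing := MvPowerSeries.X 0
noncomputable def bv : GFRing := MvPowerSeries.X 1

/-- The generating function `S_n(j,a,b,q)` of Definition 3. -/
noncomputable def S (n : ℤ) (j : ℕ) : GFRing :=
  if n < -1 then 0 else if n = -1 then 1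
  else gfOf (fun μ ν N => (BnCount n.toNat j μ ν N : ℤ))

/-- The generating function `S_n(j, aq^6, bq^6, q)`. -/
noncomputable def Ssub (n : ℤ) (j : ℕ) : GFRing :=
  if n < -1 then 0 else if n = -1 then 1
  else gfOf (fun μ ν N =>
    if 6 * μ + 6 * ν ≤ N then (BnCount n.toNat j μ ν (N - 6 * μ - 6 * ν) : ℤ) else 0)

/-- For any partition satisfying conditions (i)–(iii), the multiset of parts
lying in the interval `[6i+1, 6i+6]` is one of the 16 configurations of Table 1. -/
theorem parts_in_interval_mem_configs (l : List ℕ) (hl : BCond l) (i : ℕ) :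
    ∃ k < 16, Multiset.filter (fun x => 6 * i + 1 ≤ x ∧ x ≤ 6 * i + 6) ↑l = cfg i k := by
  obtain ⟨hsort, hpos, hrep, hgap, h3, h24, h57, hiii⟩ := hl
  -- at most two parts in the interval
  have hcard : (l.filter (fun x => decide (6 * i + 1 ≤ x ∧ x ≤ 6 * i + 6))).length ≤ 2 := by
    by_contra hcon
    push_neg at hcon
    have hc : 3 ≤ (l.filter (fun x => decide (6 * i + 1 ≤ x ∧ x ≤ 6 * i + 6))).length := hcon
    set lf := l.filter (fun x => decide (6 * i + 1 ≤ x ∧ x ≤ 6 * i + 6)) with hlf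
    have hsub : List.Sublist lf l := List.filter_sublist
    obtain ⟨f, hf⟩ := List.sublist_iff_exists_fin_orderEmbedding_get_eq.mp hsub
    have hmem : ∀ t : Fin lf.length, 6 * i + 1 ≤ lf.get t ∧ lf.get t ≤ 6 * i + 6 := by
      intro t
      have h1 : lf.get t ∈ List.filter (fun x => decide (6 * i + 1 ≤ x ∧ x ≤ 6 * i + 6)) l := by
        rw [← hlf]; exact lf.get_mem _
      simpa using List.of_mem_filter h1
    have h01 : (f ⟨0, by omega⟩ : ℕ) < (f ⟨1, by omega⟩ : ℕ) := f.strictMono (by simp [Fin.lt_def])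
    have h12 : (f ⟨1, by omega⟩ : ℕ) < (f ⟨2, by omega⟩ : ℕ) := f.strictMono (by simp [Fin.lt_def])
    obtain ⟨a0, ha0⟩ : ∃ a : Fin l.length, a = f ⟨0, by omega⟩ := ⟨_, rfl⟩
    obtain ⟨a2, ha2⟩ : ∃ a : Fin l.length, a = f ⟨2, by omega⟩ := ⟨_, rfl⟩
    have hq : (a0 : ℕ) + 2 < l.length := by
      have h2 := a2.isLt
      rw [ha0, ha2] at *
      omega
    have hge1 : l.get ⟨(a0 : ℕ) + 2, hq⟩ ≥ l.get a2 := by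
      rcases eq_or_lt_of_le (show (a0:ℕ)+2 ≤ (a2:ℕ) by rw [ha0, ha2]; omega) with h|h
      · have : (⟨(a0:ℕ)+2, hq⟩ : Fin l.length) = a2 := Fin.ext h
        rw [this]
      · exact hsort.rel_get_of_lt h
    have hge2 : l.get a0 ≥ l.get ⟨(a0 : ℕ) + 2, hq⟩ :=
      hsort.rel_get_of_lt (by simp [Fin.lt_def])
    have hv0 := hmem ⟨0, by omega⟩
    have hv2 := hmem ⟨2, by omega⟩
    rw [hf ⟨0, by omega⟩, ← ha0] at hv0
    rw [hf ⟨2, by omega⟩, ← ha2] at hv2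
    have hg := (hgap a0 hq).1
    have heq : l.get ⟨(a0:ℕ), by omega⟩ = l.get a0 := by congr
    rw [heq] at hg
    omega
  have e1 : l.count (6*i+1) ≤ 1 := hrep _ (by omega)
  have e2 : l.count (6*i+2) ≤ 1 := hrep _ (by omega)
  have e4 : l.count (6*i+4) ≤ 1 := hrep _ (by omega)
  have e5 : l.count (6*i+5) ≤ 1 := hrep _ (by omega)
  have e3 : l.count (6*i+3) = 0 := h3 i
  have e24 : l.count (6*i+2) + l.count (6*i+4) ≤ 1 := h24 i
  have hM0 : Multiset.filter (fun x => 6 * i + 1 ≤ x ∧ x ≤ 6 * i + 6) (↑l : Multiset ℕ) =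
      Multiset.replicate (l.count (6*i+6)) (6*i+6) + Multiset.replicate (l.count (6*i+5)) (6*i+5)
      + Multiset.replicate (l.count (6*i+4)) (6*i+4) + Multiset.replicate (l.count (6*i+2)) (6*i+2)
      + Multiset.replicate (l.count (6*i+1)) (6*i+1) := by
    ext v
    simp only [Multiset.count_filter, Multiset.count_add, Multiset.count_replicate,
      Multiset.coe_count]
    by_cases hv : 6 * i + 1 ≤ v ∧ v ≤ 6 * i + 6
    · obtain rfl|rfl|rfl|rfl|rfl|rfl :
        v = 6*i+1 ∨ v = 6*i+2 ∨ v = 6*i+3 ∨ v = 6*i+4 ∨ v = 6*i+5 ∨ v = 6*i+6 := by omega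
      all_goals split_ifs <;> omega
    · split_ifs <;> omega
  have hsum : l.count (6*i+6) + l.count (6*i+5) + l.count (6*i+4) + l.count (6*i+2)
      + l.count (6*i+1) ≤ 2 := by
    have hc := congrArg Multiset.card hM0
    rw [show Multiset.filter (fun x => 6 * i + 1 ≤ x ∧ x ≤ 6 * i + 6) (↑l : Multiset ℕ)
        = ↑(l.filter (fun x => decide (6 * i + 1 ≤ x ∧ x ≤ 6 * i + 6))) from rfl] at hc
    simp only [Multiset.coe_card, Multiset.card_add, Multiset.card_replicate] at hc
    omega
  have d1 : l.count (6*i+1) = 0 ∨ l.count (6*i+1) = 1 := by omega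
  have d2 : l.count (6*i+2) = 0 ∨ l.count (6*i+2) = 1 := by omega
  have d4 : l.count (6*i+4) = 0 ∨ l.count (6*i+4) = 1 := by omega
  have d5 : l.count (6*i+5) = 0 ∨ l.count (6*i+5) = 1 := by omega
  have d6 : l.count (6*i+6) = 0 ∨ l.count (6*i+6) = 1 ∨ l.count (6*i+6) = 2 := by omega
  rcases d6 with h6|h6|h6 <;> rcases d5 with h5|h5 <;> rcases d4 with h4|h4 <;>
    rcases d2 with h2|h2 <;> rcases d1 with h1|h1 <;>
    rw [h6, h5, h4, h2, h1] at hM0 <;>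
    first
    | (exfalso; omega)
    | (refine ⟨0, by norm_num, ?_⟩; rw [hM0]; simp [cfg, Multiset.replicate_succ, Multiset.singleton_add]; done)
    | (refine ⟨1, by norm_num, ?_⟩; rw [hM0]; simp [cfg, Multiset.replicate_succ, Multiset.singleton_add]; done)
    | (refine ⟨2, by norm_num, ?_⟩; rw [hM0]; simp [cfg, Multiset.replicate_succ, Multiset.singleton_add]; done)
    | (refine ⟨3, by norm_num, ?_⟩; rw [hM0]; simp [cfg, Multiset.replicate_succ, Multiset.singleton_add]; done)
    | (refine ⟨4, by norm_num, ?_⟩; rw [hM0]; simp [cfg, Multiset.replicate_succ, Multiset.singleton_add]; done)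
    | (refine ⟨5, by norm_num, ?_⟩; rw [hM0]; simp [cfg, Multiset.replicate_succ, Multiset.singleton_add]; done)
    | (refine ⟨6, by norm_num, ?_⟩; rw [hM0]; simp [cfg, Multiset.replicate_succ, Multiset.singleton_add]; done)
    | (refine ⟨7, by norm_num, ?_⟩; rw [hM0]; simp [cfg, Multiset.replicate_succ, Multiset.singleton_add]; done)
    | (refine ⟨8, by norm_num, ?_⟩; rw [hM0]; simp [cfg, Multiset.replicate_succ, Multiset.singleton_add]; done)
    | (refine ⟨9, by norm_num, ?_⟩; rw [hM0]; simp [cfg, Multiset.replicate_succ, Multiset.singleton_add]; done)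
    | (refine ⟨10, by norm_num, ?_⟩; rw [hM0]; simp [cfg, Multiset.replicate_succ, Multiset.singleton_add]; done)
    | (refine ⟨11, by norm_num, ?_⟩; rw [hM0]; simp [cfg, Multiset.replicate_succ, Multiset.singleton_add]; done)
    | (refine ⟨12, by norm_num, ?_⟩; rw [hM0]; simp [cfg, Multiset.replicate_succ, Multiset.singleton_add]; done)
    | (refine ⟨13, by norm_num, ?_⟩; rw [hM0]; simp [cfg, Multiset.replicate_succ, Multiset.singleton_add]; done)
    | (refine ⟨14, by norm_num, ?_⟩; rw [hM0]; simp [cfg, Multiset.replicate_succ, Multiset.singleton_add]; done)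
    | (refine ⟨15, by norm_num, ?_⟩; rw [hM0]; simp [cfg, Multiset.replicate_succ, Multiset.singleton_add]; done)
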